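/- arXiv:math/0504512 — 2 statements merged into one kernel-verified Lean document; each statement's English description precedes it below -/
import Mathlib

section
/- Let ψ: X × Θ → R^m with Θ ⊂ R^k open, and fix θ_0 ∈ Θ. Suppose X_1, X_2, ... are i.i.d. with law P_{θ_0}, E_{θ_0} |ψ(X_1; θ_0 + ε) - ψ(X_1; θ_0)|^2 → 0 as ε → 0, and the map ε ↦ E_{θ_0} ψ(X_1; θ_0 + ε) is differentiable at 0 with derivative matrix c. Then for any sequence θ_n with √n(θ_n - θ_0) bounded, n^{-1/2} ∑_{i=1}^n ψ(X_i; θ_n) - n^{-1/2} ∑_{i=1}^n ψ(X_i; θ_0) - c √n(θ_n - θ_0) → 0 in probability under P_{θ_0}. -/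
open MeasureTheory Filter Finset
open scoped Topology

open ProbabilityTheory in
lemma moment_sum_sq {Ω α : Type*} [MeasurableSpace Ω] [MeasurableSpace α]
    (P : Measure Ω) [IsProbabilityMeasure P] (ν : Measure α) [IsProbabilityMeasure ν]
    {m : ℕ} (g : α → EuclideanSpace ℝ (Fin m)) (hg : Measurable g)
    (hg2 : MemLp g 2 ν) (hg0 : ∫ x, g x ∂ν = 0)
    (X : ℕ → Ω → α) (hXmeas : ∀ i, Measurable (X i))
    (hindep : iIndepFun X P)
    (hlaw : ∀ i, Measure.map (X i) P = ν) (n : ℕ) :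
    ∫ ω, ‖∑ i ∈ Finset.range n, g (X i ω)‖ ^ 2 ∂P = n * ∫ x, ‖g x‖ ^ 2 ∂ν := by
  have mp : ∀ i, MeasurePreserving (X i) P ν := fun i => ⟨hXmeas i, hlaw i⟩
  set a : ℕ → Fin m → Ω → ℝ := fun i c ω => g (X i ω) c with ha
  have hgc_meas : ∀ c : Fin m, Measurable fun x => g x c :=
    fun c => (EuclideanSpace.proj (𝕜 := ℝ) c).measurable.comp hg
  have hgc2 : ∀ c : Fin m, MemLp (fun x => g x c) 2 ν := fun c => by
    exact (ContinuousLinearMap.comp_memLp' (EuclideanSpace.proj (𝕜 := ℝ) c) hg2)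
  have ha_meas : ∀ i c, Measurable (a i c) := fun i c => (hgc_meas c).comp (hXmeas i)
  have ha2 : ∀ i c, MemLp (a i c) 2 P := fun i c =>
    (hgc2 c).comp_measurePreserving (mp i)
  have hci : ∀ (i : ℕ) (h : α → ℝ), AEStronglyMeasurable h ν →
      ∫ ω, h (X i ω) ∂P = ∫ x, h x ∂ν := by
    intro i h hh
    rw [← hlaw i] at hh ⊢
    exact (integral_map (hXmeas i).aemeasurable hh).symm
  have ha0 : ∀ i c, ∫ ω, a i c ω ∂P = 0 := by
    intro i c
    rw [ha]
    rw [hci i _ (hgc_meas c).aestronglyMeasurable]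
    have := (EuclideanSpace.proj (𝕜 := ℝ) c).integral_comp_comm (hg2.integrable one_le_two)
    have h2 : ∫ x, g x c ∂ν = (EuclideanSpace.proj (𝕜 := ℝ) c) (∫ x, g x ∂ν) := this
    rw [h2, hg0]
    simp
  have hprod : ∀ (i j : ℕ) (c : Fin m), Integrable (fun ω => a i c ω * a j c ω) P := by
    intro i j c
    rcases eq_or_ne i j with rfl | hij
    · have := (ha2 i c).integrable_sq
      simpa [sq] using this
    · exact IndepFun.integrable_mul
        ((hindep.indepFun hij).comp (hgc_meas c) (hgc_meas c))
        ((ha2 i c).integrable one_le_two) ((ha2 j c).integrable one_le_two)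
  have key : ∀ c : Fin m, ∫ ω, (∑ i ∈ range n, a i c ω) ^ 2 ∂P
      = ∑ i ∈ range n, ∫ x, (g x c) ^ 2 ∂ν := by
    intro c
    have hexp : ∀ ω : Ω, (∑ i ∈ range n, a i c ω) ^ 2
        = ∑ i ∈ range n, ∑ j ∈ range n, a i c ω * a j c ω := by
      intro ω; rw [sq, Finset.sum_mul_sum]
    simp_rw [hexp]
    rw [integral_finset_sum _ (fun i _ => integrable_finset_sum _ fun j _ => hprod i j c)]
    have hinner : ∀ i ∈ range n,
        ∫ ω, ∑ j ∈ range n, a i c ω * a j c ω ∂P = ∫ x, (g x c) ^ 2 ∂ν := by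
      intro i hi
      rw [integral_finset_sum _ (fun j _ => hprod i j c)]
      rw [Finset.sum_eq_single_of_mem i hi]
      · rw [show (fun ω => a i c ω * a i c ω) = fun ω => (g (X i ω) c) ^ 2 by
          funext ω; exact (pow_two _).symm]
        exact hci i _ (((hgc_meas c).pow_const 2).aestronglyMeasurable)
      · intro j _ hji
        have hmul := ((hindep.indepFun (Ne.symm hji)).comp (hgc_meas c)
          (hgc_meas c)).integral_mul_eq_mul_integral
          ((ha2 i c).integrable one_le_two).aestronglyMeasurable ((ha2 j c).integrable one_le_two).aestronglyMeasurable
        refine hmul.trans ?_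
        rw [show ((fun x => g x c) ∘ X i) = a i c from rfl,
          show ((fun x => g x c) ∘ X j) = a j c from rfl, ha0 i c, ha0 j c, mul_zero]
    exact Finset.sum_congr rfl hinner
  have hnorm : ∀ v : EuclideanSpace ℝ (Fin m), ‖v‖ ^ 2 = ∑ c, (v c) ^ 2 := by
    intro v
    rw [EuclideanSpace.norm_eq, Real.sq_sqrt (by positivity)]
    simp [Real.norm_eq_abs, sq_abs]
  have hSc : ∀ (ω : Ω) (c : Fin m),
      (∑ i ∈ range n, g (X i ω)) c = ∑ i ∈ range n, a i c ω := by
    intro ω c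
    exact map_sum (EuclideanSpace.proj (𝕜 := ℝ) c) (fun i => g (X i ω)) (range n)
  calc ∫ ω, ‖∑ i ∈ range n, g (X i ω)‖ ^ 2 ∂P
      = ∫ ω, ∑ c, (∑ i ∈ range n, a i c ω) ^ 2 ∂P := by
        congr 1; funext ω; rw [hnorm]
        exact Finset.sum_congr rfl fun c _ => by rw [hSc]
    _ = ∑ c, ∫ ω, (∑ i ∈ range n, a i c ω) ^ 2 ∂P := by
        refine integral_finset_sum _ fun c _ => ?_
        have : MemLp (fun ω => ∑ i ∈ range n, a i c ω) 2 P :=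
          memLp_finset_sum (range n) (fun i _ => ha2 i c)
        simpa [sq] using this.integrable_sq
    _ = ∑ c, ∑ i ∈ range n, ∫ x, (g x c) ^ 2 ∂ν := by
        exact Finset.sum_congr rfl fun c _ => key c
    _ = ∑ i ∈ range n, ∑ c, ∫ x, (g x c) ^ 2 ∂ν := Finset.sum_comm
    _ = ∑ i ∈ range n, ∫ x, ‖g x‖ ^ 2 ∂ν := by
        refine Finset.sum_congr rfl fun i _ => ?_
        rw [← integral_finset_sum _ (fun c _ => by
          simpa [sq] using (hgc2 c).integrable_sq)]
        congr 1; funext x; rw [hnorm]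
    _ = n * ∫ x, ‖g x‖ ^ 2 ∂ν := by
        rw [Finset.sum_const, card_range, nsmul_eq_mul]

/-- Lemma 2.1 of Klaassen–Putter: let `ψ : X × Θ → ℝᵐ` with `Θ ⊂ ℝᵏ` open and
`θ₀ ∈ Θ`.  If `X₁, X₂, ...` are i.i.d. with law `ν = P_{θ₀}`,
`E‖ψ(X₁; θ₀ + ε) - ψ(X₁; θ₀)‖² → 0` as `ε → 0`, and
`ε ↦ E ψ(X₁; θ₀ + ε)` is differentiable at `0` with derivative `c`, then for
any sequence `θₙ` with `√n (θₙ - θ₀)` bounded,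
`n^{-1/2} ∑ ψ(Xᵢ; θₙ) - n^{-1/2} ∑ ψ(Xᵢ; θ₀) - c √n (θₙ - θ₀) → 0` in
probability. -/
theorem asymptotic_differentiability_of_averages
    {Ω : Type*} [MeasurableSpace Ω] (P : Measure Ω) [IsProbabilityMeasure P]
    {α : Type*} [MeasurableSpace α] (ν : Measure α) [IsProbabilityMeasure ν]
    {k m : ℕ}
    (Θ : Set (EuclideanSpace ℝ (Fin k))) (hΘ : IsOpen Θ)
    (θ0 : EuclideanSpace ℝ (Fin k)) (hθ0 : θ0 ∈ Θ)
    (ψ : α → EuclideanSpace ℝ (Fin k) → EuclideanSpace ℝ (Fin m))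
    (hψmeas : ∀ θ, Measurable fun x => ψ x θ)
    (hψsq : ∀ θ ∈ Θ, Integrable (fun x => ‖ψ x θ‖ ^ 2) ν)
    (hmean0 : ∫ x, ψ x θ0 ∂ν = 0)
    (X : ℕ → Ω → α) (hXmeas : ∀ i, Measurable (X i))
    (hindep : ProbabilityTheory.iIndepFun X P)
    (hlaw : ∀ i, Measure.map (X i) P = ν)
    (hcont : Tendsto (fun t : EuclideanSpace ℝ (Fin k) =>
        ∫ x, ‖ψ x (θ0 + t) - ψ x θ0‖ ^ 2 ∂ν) (𝓝 0) (𝓝 0))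
    (c : EuclideanSpace ℝ (Fin k) →L[ℝ] EuclideanSpace ℝ (Fin m))
    (hdiff : HasFDerivAt (fun t => ∫ x, ψ x t ∂ν) c θ0)
    (θseq : ℕ → EuclideanSpace ℝ (Fin k)) (hθseqΘ : ∀ n, θseq n ∈ Θ)
    (hbdd : ∃ C : ℝ, ∀ n : ℕ, Real.sqrt n * ‖θseq n - θ0‖ ≤ C) :
    TendstoInMeasure P
      (fun (n : ℕ) (ω : Ω) =>
        (Real.sqrt n)⁻¹ • ∑ i ∈ range n, ψ (X i ω) (θseq n)
          - (Real.sqrt n)⁻¹ • ∑ i ∈ range n, ψ (X i ω) θ0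
          - Real.sqrt n • c (θseq n - θ0))
      atTop (fun _ => 0) := by
  classical
  obtain ⟨C, hC⟩ := hbdd
  -- basic Lp facts about ψ
  have ψmem : ∀ θ ∈ Θ, MemLp (fun x => ψ x θ) 2 ν := fun θ hθ =>
    (memLp_two_iff_integrable_sq_norm (hψmeas θ).aestronglyMeasurable).mpr (hψsq θ hθ)
  have ψint : ∀ θ ∈ Θ, Integrable (fun x => ψ x θ) ν := fun θ hθ =>
    (ψmem θ hθ).integrable one_le_two
  -- notation
  set f : ℕ → α → EuclideanSpace ℝ (Fin m) :=
    fun n x => ψ x (θseq n) - ψ x θ0 with hf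
  set μn : ℕ → EuclideanSpace ℝ (Fin m) := fun n => ∫ x, f n x ∂ν with hμn
  set g : ℕ → α → EuclideanSpace ℝ (Fin m) := fun n x => f n x - μn n with hgdef
  have hf_meas : ∀ n, Measurable (f n) := fun n =>
    (hψmeas (θseq n)).sub (hψmeas θ0)
  have hfmem : ∀ n, MemLp (f n) 2 ν := fun n =>
    (ψmem _ (hθseqΘ n)).sub (ψmem _ hθ0)
  have hfint : ∀ n, Integrable (f n) ν := fun n => (hfmem n).integrable one_le_two
  have hg_meas : ∀ n, Measurable (g n) := fun n => (hf_meas n).sub measurable_const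
  have hgmem : ∀ n, MemLp (g n) 2 ν := fun n => (hfmem n).sub (memLp_const _)
  have hg0 : ∀ n, ∫ x, g n x ∂ν = 0 := by
    intro n
    rw [hgdef]
    simp only
    rw [integral_sub (hfint n) (integrable_const _), integral_const]
    simp [hμn]
  -- convergence of θseq to θ0
  have hsqrt_pos : ∀ n : ℕ, 1 ≤ n → (0 : ℝ) < Real.sqrt n := by
    intro n hn
    apply Real.sqrt_pos.2
    exact_mod_cast Nat.lt_of_lt_of_le Nat.zero_lt_one hn
  have hsqrtn_atTop : Tendsto (fun n : ℕ => Real.sqrt n) atTop atTop := by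
    have h1 : Tendsto (fun x : ℝ => x ^ (1/2 : ℝ)) atTop atTop :=
      tendsto_rpow_atTop (by norm_num)
    have h2 := h1.comp tendsto_natCast_atTop_atTop (α := ℕ)
    refine h2.congr fun n => ?_
    simp [Function.comp, Real.sqrt_eq_rpow]
  have hθdiff0 : Tendsto (fun n => θseq n - θ0) atTop (𝓝 0) := by
    rw [tendsto_zero_iff_norm_tendsto_zero]
    have hle : ∀ᶠ n : ℕ in atTop, ‖θseq n - θ0‖ ≤ C * (Real.sqrt n)⁻¹ := by
      filter_upwards [eventually_ge_atTop 1] with n hn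
      have h := hC n
      rw [mul_comm] at h
      rw [← le_div_iff₀ (hsqrt_pos n hn)] at h
      simpa [div_eq_mul_inv] using h
    have hlim : Tendsto (fun n : ℕ => C * (Real.sqrt n)⁻¹) atTop (𝓝 0) := by
      have := hsqrtn_atTop.inv_tendsto_atTop
      simpa using this.const_mul C
    exact squeeze_zero' (Eventually.of_forall fun n => norm_nonneg _) hle hlim
  have hθto : Tendsto θseq atTop (𝓝 θ0) := by
    have := hθdiff0.add_const θ0
    simpa using this
  -- second moments
  set W : ℕ → ℝ := fun n => ∫ x, ‖f n x‖ ^ 2 ∂ν with hW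
  set V : ℕ → ℝ := fun n => ∫ x, ‖g n x‖ ^ 2 ∂ν with hV
  have hW0 : Tendsto W atTop (𝓝 0) := by
    have := hcont.comp hθdiff0
    refine this.congr fun n => ?_
    simp [hW, hf, Function.comp, add_sub_cancel]
  have hfsq_int : ∀ n, Integrable (fun x => ‖f n x‖ ^ 2) ν := fun n =>
    (memLp_two_iff_integrable_sq_norm (hf_meas n).aestronglyMeasurable).mp (hfmem n)
  have hVW : ∀ n, V n ≤ W n := by
    intro n
    have hexp : ∀ x, ‖g n x‖ ^ 2
        = ‖f n x‖ ^ 2 - 2 * (inner ℝ (μn n) (f n x) : ℝ) + ‖μn n‖ ^ 2 := by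
      intro x
      rw [hgdef]
      simp only
      rw [norm_sub_sq_real]
      rw [real_inner_comm]
    have hinner_int : Integrable (fun x => 2 * (inner ℝ (μn n) (f n x) : ℝ)) ν :=
      ((hfint n).const_inner (𝕜 := ℝ) (μn n)).const_mul 2
    have hsub_int : Integrable
        (fun x => ‖f n x‖ ^ 2 - 2 * (inner ℝ (μn n) (f n x) : ℝ)) ν :=
      (hfsq_int n).sub hinner_int
    have : V n = W n - ‖μn n‖ ^ 2 := by
      rw [hV, hW]
      simp only
      calc ∫ x, ‖g n x‖ ^ 2 ∂ν
          = ∫ x, (‖f n x‖ ^ 2 - 2 * (inner ℝ (μn n) (f n x) : ℝ) + ‖μn n‖ ^ 2) ∂ν := by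
            exact integral_congr_ae (Eventually.of_forall hexp)
        _ = (∫ x, (‖f n x‖ ^ 2 - 2 * (inner ℝ (μn n) (f n x) : ℝ)) ∂ν) + ‖μn n‖ ^ 2 := by
            rw [integral_add hsub_int (integrable_const _), integral_const]
            simp
        _ = (∫ x, ‖f n x‖ ^ 2 ∂ν) - 2 * (inner ℝ (μn n) (μn n) : ℝ) + ‖μn n‖ ^ 2 := by
            rw [integral_sub (hfsq_int n) hinner_int, integral_const_mul,
              integral_inner (hfint n)]
        _ = (∫ x, ‖f n x‖ ^ 2 ∂ν) - ‖μn n‖ ^ 2 := by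
            rw [real_inner_self_eq_norm_sq]; ring
    rw [this]
    have : (0:ℝ) ≤ ‖μn n‖ ^ 2 := by positivity
    linarith
  have hVnonneg : ∀ n, 0 ≤ V n :=
    fun n => integral_nonneg fun x => by positivity
  have hV0 : Tendsto V atTop (𝓝 0) := squeeze_zero hVnonneg hVW hW0
  -- the centered sums
  set S : ℕ → Ω → EuclideanSpace ℝ (Fin m) :=
    fun n ω => ∑ i ∈ range n, g n (X i ω) with hS
  have hSmom : ∀ n, ∫ ω, ‖S n ω‖ ^ 2 ∂P = n * V n := fun n =>
    moment_sum_sq P ν (g n) (hg_meas n) (hgmem n) (hg0 n) X hXmeas hindep hlaw n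
  have hSmem : ∀ n, MemLp (S n) 2 P := by
    intro n
    exact memLp_finset_sum (range n)
      (fun i _ => (hgmem n).comp_measurePreserving ⟨hXmeas i, hlaw i⟩)
  -- deterministic part
  set d : ℕ → EuclideanSpace ℝ (Fin m) :=
    fun n => Real.sqrt n • μn n - Real.sqrt n • c (θseq n - θ0) with hd
  have hμeq : ∀ n, μn n = (∫ x, ψ x (θseq n) ∂ν) - ∫ x, ψ x θ0 ∂ν := by
    intro n
    rw [hμn]
    simp only [hf]
    exact integral_sub (ψint _ (hθseqΘ n)) (ψint _ hθ0)
  have hd0 : Tendsto d atTop (𝓝 0) := by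
    rw [NormedAddCommGroup.tendsto_nhds_zero]
    intro ε hε
    set C' : ℝ := max C 1 with hC'
    have hC'pos : (0:ℝ) < C' := lt_of_lt_of_le one_pos (le_max_right _ _)
    have hδpos : (0:ℝ) < ε / (2 * C') := by positivity
    have hbound := hθto.eventually (Asymptotics.isLittleO_iff.mp hdiff.isLittleO hδpos)
    filter_upwards [hbound] with n hn
    have hdn : d n = Real.sqrt n • (μn n - c (θseq n - θ0)) := by
      rw [hd]; simp [smul_sub]
    have heq : μn n - c (θseq n - θ0)
        = (∫ x, ψ x (θseq n) ∂ν) - (∫ x, ψ x θ0 ∂ν) - c (θseq n - θ0) := by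
      rw [hμeq n, sub_sub]
    have hnorm : ‖d n‖ = Real.sqrt n * ‖μn n - c (θseq n - θ0)‖ := by
      rw [hdn, norm_smul, Real.norm_eq_abs, abs_of_nonneg (Real.sqrt_nonneg _)]
    have hn' : ‖μn n - c (θseq n - θ0)‖ ≤ ε / (2 * C') * ‖θseq n - θ0‖ := by
      rw [heq]; simpa using hn
    calc ‖d n‖ = Real.sqrt n * ‖μn n - c (θseq n - θ0)‖ := hnorm
      _ ≤ Real.sqrt n * (ε / (2 * C') * ‖θseq n - θ0‖) := by
          exact mul_le_mul_of_nonneg_left hn' (Real.sqrt_nonneg _)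
      _ = ε / (2 * C') * (Real.sqrt n * ‖θseq n - θ0‖) := by ring
      _ ≤ ε / (2 * C') * C' := by
          refine mul_le_mul_of_nonneg_left ?_ hδpos.le
          exact (hC n).trans (le_max_left _ _)
      _ = ε / 2 := by field_simp
      _ < ε := by linarith
  -- the full sequence of random vectors
  set F : ℕ → Ω → EuclideanSpace ℝ (Fin m) := fun n ω =>
    (Real.sqrt n)⁻¹ • ∑ i ∈ range n, ψ (X i ω) (θseq n)
      - (Real.sqrt n)⁻¹ • ∑ i ∈ range n, ψ (X i ω) θ0
      - Real.sqrt n • c (θseq n - θ0) with hFdef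
  have hFmeas : ∀ n : ℕ, AEStronglyMeasurable (F n) P := by
    intro n
    apply Measurable.aestronglyMeasurable
    apply Measurable.sub _ measurable_const
    apply Measurable.sub
    · exact (Finset.measurable_sum (range n) fun i _ => (hψmeas (θseq n)).comp (hXmeas i)).const_smul (Real.sqrt n)⁻¹
    · exact (Finset.measurable_sum (range n) fun i _ => (hψmeas θ0).comp (hXmeas i)).const_smul (Real.sqrt n)⁻¹
  -- pointwise decomposition for n ≥ 1
  have hFeq : ∀ n : ℕ, 1 ≤ n → F n = ((Real.sqrt n)⁻¹ • S n) + fun _ => d n := by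
    intro n hn
    have hsp := hsqrt_pos n hn
    have hmul : (Real.sqrt n)⁻¹ * (n : ℝ) = Real.sqrt n := by
      rw [inv_mul_eq_div, div_eq_iff hsp.ne']
      exact (Real.mul_self_sqrt (Nat.cast_nonneg n)).symm
    funext ω
    have hsum : S n ω = (∑ i ∈ range n, ψ (X i ω) (θseq n))
        - (∑ i ∈ range n, ψ (X i ω) θ0) - (n : ℝ) • μn n := by
      rw [hS]
      simp only [hgdef, hf]
      rw [Finset.sum_sub_distrib, Finset.sum_sub_distrib, Finset.sum_const, card_range]
      congr 1
      rw [Nat.cast_smul_eq_nsmul]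
    show F n ω = (Real.sqrt n)⁻¹ • S n ω + d n
    rw [hFdef]
    simp only
    rw [hsum, hd, smul_sub, smul_sub, smul_smul, hmul]
    module
  -- eLpNorm computation for the stochastic part
  have hstoch : ∀ n : ℕ, 1 ≤ n →
      eLpNorm ((Real.sqrt n)⁻¹ • S n) 2 P = ENNReal.ofReal (Real.sqrt (V n)) := by
    intro n hn
    have hsp := hsqrt_pos n hn
    have hSn : eLpNorm (S n) 2 P = ENNReal.ofReal (((n:ℝ) * V n) ^ ((2:ℝ)⁻¹)) := by
      rw [(hSmem n).eLpNorm_eq_integral_rpow_norm two_ne_zero ENNReal.ofNat_ne_top]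
      have hint : ∫ ω, ‖S n ω‖ ^ ((2:ENNReal).toReal) ∂P = (n:ℝ) * V n := by
        rw [← hSmom n]
        congr 1
        funext ω
        rw [ENNReal.toReal_ofNat, ← Real.rpow_natCast ‖S n ω‖ 2]
        norm_num
      rw [hint]
      norm_num
    rw [eLpNorm_const_smul, hSn,
      ← ofReal_norm, Real.norm_eq_abs,
      abs_of_nonneg (inv_nonneg.2 (Real.sqrt_nonneg _)),
      ← ENNReal.ofReal_mul (by positivity)]
    congr 1
    have hrw : ((n:ℝ) * V n) ^ ((2:ℝ)⁻¹) = Real.sqrt ((n:ℝ) * V n) := by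
      rw [Real.sqrt_eq_rpow]
      norm_num
    rw [hrw, Real.sqrt_mul (Nat.cast_nonneg n), inv_mul_cancel_left₀ hsp.ne']
  -- eventual bound on the eLpNorm of F n
  have hbound : ∀ᶠ n in atTop, eLpNorm (F n) 2 P
      ≤ ENNReal.ofReal (Real.sqrt (V n)) + ENNReal.ofReal ‖d n‖ := by
    filter_upwards [eventually_ge_atTop 1] with n hn
    rw [hFeq n hn]
    refine le_trans (eLpNorm_add_le (((hSmem n).const_smul _).aestronglyMeasurable)
      aestronglyMeasurable_const one_le_two) ?_
    rw [hstoch n hn, eLpNorm_const _ two_ne_zero (IsProbabilityMeasure.ne_zero P)]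
    simp [ofReal_norm]
  -- convergence of the bound
  have hu : Tendsto (fun n => ENNReal.ofReal (Real.sqrt (V n)) + ENNReal.ofReal ‖d n‖)
      atTop (𝓝 0) := by
    have h1 : Tendsto (fun n => Real.sqrt (V n)) atTop (𝓝 0) := by
      have := hV0.sqrt
      simpa using this
    have h2 : Tendsto (fun n => ‖d n‖) atTop (𝓝 0) :=
      tendsto_zero_iff_norm_tendsto_zero.mp hd0
    have := (ENNReal.tendsto_ofReal h1).add (ENNReal.tendsto_ofReal h2)
    simpa using this
  have htend : Tendsto (fun n => eLpNorm (F n) 2 P) atTop (𝓝 0) := by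
    refine tendsto_of_tendsto_of_tendsto_of_le_of_le' tendsto_const_nhds hu ?_ hbound
    exact Eventually.of_forall fun n => zero_le
  refine tendstoInMeasure_of_tendsto_eLpNorm_of_ne_top (p := 2) two_ne_zero
    ENNReal.ofNat_ne_top hFmeas aestronglyMeasurable_const ?_
  refine htend.congr fun n => ?_
  congr 1
  funext ω
  simp
end

section
/- Let X_1,...,X_n be i.i.d. random variables with distribution function G on R having mean zero and finite nonzero variance σ². Define the weighted empirical G̃_n(ψ) = n^{-1} ∑_{i=1}^n {1 - X_i X̄_n / S_n²} ψ(X_i) where S_n² = n^{-1} ∑ X_j². Then for every ψ ∈ L²(G), √n (G̃_n(ψ) - ∫ψ dG - n^{-1} ∑_{i=1}^n [ψ(X_i) - ∫ψ dG - (Cov(ψ(X),X)/σ²) X_i]) → 0 in probability. -/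
open MeasureTheory Filter Finset
open scoped Topology

private lemma key_alg (a b q p m cc sn N : ℝ) (h : N⁻¹ * N = 1) :
    sn * (N⁻¹ * (a - N⁻¹ * b * (N⁻¹ * q)⁻¹ * p) - m - N⁻¹ * (a - N * m - cc * b)) =
      (sn * (N⁻¹ * b)) * (cc - (N⁻¹ * p) * (N⁻¹ * q)⁻¹) := by
  linear_combination sn * m * h

private lemma tight_mul {Ω : Type*} [MeasurableSpace Ω] {P : Measure Ω}
    [IsProbabilityMeasure P] {Y Z : ℕ → Ω → ℝ} {C : ℝ}
    (hY : ∀ (n : ℕ) (M : ℝ), 0 < M → P {ω | M ≤ |Y n ω|} ≤ ENNReal.ofReal (C / M ^ 2))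
    (hZmeas : ∀ n, AEStronglyMeasurable (Z n) P)
    (hZ : ∀ᵐ ω ∂P, Tendsto (fun n => Z n ω) atTop (𝓝 (0 : ℝ))) :
    TendstoInMeasure P (fun n ω => Y n ω * Z n ω) atTop (fun _ => (0 : ℝ)) := by
  have hZm : TendstoInMeasure P Z atTop (fun _ => (0 : ℝ)) :=
    tendstoInMeasure_of_tendsto_ae hZmeas hZ
  rw [tendstoInMeasure_iff_dist] at hZm ⊢
  intro ε hε
  rw [ENNReal.tendsto_atTop_zero]
  intro δ hδ
  set δ' : ENNReal := min δ 1 with hδ'def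
  have hδ'pos : 0 < δ' := lt_min hδ zero_lt_one
  have hδ'top : δ' ≠ ⊤ := ne_top_of_le_ne_top ENNReal.one_ne_top (min_le_right _ _)
  have hhalf_top : δ' / 2 ≠ ⊤ :=
    (ENNReal.div_lt_top hδ'top (by norm_num)).ne
  set d : ℝ := (δ' / 2).toReal with hd
  have hdpos : 0 < d := ENNReal.toReal_pos (by simp [ENNReal.div_eq_top, hδ'pos.ne', hδ'top]) hhalf_top
  set M : ℝ := Real.sqrt (|C| / d) + 1 with hM2def
  have hMpos : 0 < M := by positivity
  have hCM : C / M ^ 2 ≤ d := by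
    have hs := Real.sq_sqrt (div_nonneg (abs_nonneg C) hdpos.le)
    have hsn := Real.sqrt_nonneg (|C| / d)
    have hCle := le_abs_self C
    have habs : d * (|C| / d) = |C| := mul_div_cancel₀ _ hdpos.ne'
    have hds : d * Real.sqrt (|C| / d) ^ 2 = |C| := by rw [hs]; exact habs
    have hkey : C ≤ d * M ^ 2 := by
      rw [hM2def]; nlinarith [mul_nonneg hdpos.le hsn]
    rw [div_le_iff₀ (by positivity)]
    exact hkey
  obtain ⟨N, hN⟩ := (ENNReal.tendsto_atTop_zero.mp (hZm (ε / M) (by positivity))) (δ' / 2)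
    (ENNReal.half_pos hδ'pos.ne')
  refine ⟨N, fun n hn => ?_⟩
  have hsub : {ω | ε ≤ dist (Y n ω * Z n ω) 0} ⊆
      {ω | M ≤ |Y n ω|} ∪ {ω | ε / M ≤ dist (Z n ω) 0} := by
    intro ω hω
    simp only [Real.dist_eq, sub_zero, Set.mem_setOf_eq, Set.mem_union] at *
    by_contra hcon
    push_neg at hcon
    obtain ⟨h1, h2⟩ := hcon
    have hlt : |Y n ω| * |Z n ω| < M * (ε / M) :=
      mul_lt_mul'' h1 h2 (abs_nonneg _) (abs_nonneg _)
    rw [mul_div_cancel₀ _ hMpos.ne'] at hlt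
    rw [abs_mul] at hω
    linarith
  calc P {ω | ε ≤ dist (Y n ω * Z n ω) 0}
      ≤ P ({ω | M ≤ |Y n ω|} ∪ {ω | ε / M ≤ dist (Z n ω) 0}) := measure_mono hsub
    _ ≤ P {ω | M ≤ |Y n ω|} + P {ω | ε / M ≤ dist (Z n ω) 0} := measure_union_le _ _
    _ ≤ ENNReal.ofReal (C / M ^ 2) + δ' / 2 := add_le_add (hY n M hMpos) (hN n hn)
    _ ≤ δ' / 2 + δ' / 2 := by
        gcongr
        exact ENNReal.ofReal_le_of_le_toReal hCM
    _ = δ' := ENNReal.add_halves δ'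
    _ ≤ δ := min_le_left _ _

/-- The computation underlying Proposition 6.2 of Klaassen–Putter (location
known, `θ = 0`): if `X₁, ..., Xₙ` are i.i.d. with law `G` of mean zero and
finite nonzero variance `σ²`, and
`G̃ₙ(ψ) = n⁻¹ ∑ {1 - Xᵢ X̄ₙ / Sₙ²} ψ(Xᵢ)` with `Sₙ² = n⁻¹ ∑ Xⱼ²`, then for
every `ψ ∈ L²(G)`,
`√n (G̃ₙ(ψ) - ∫ψ dG - n⁻¹ ∑ [ψ(Xᵢ) - ∫ψ dG - (Cov(ψ(X), X)/σ²) Xᵢ]) → 0`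
in probability. -/
theorem weighted_empirical_efficient_influence
    {Ω : Type*} [MeasurableSpace Ω] (P : Measure Ω) [IsProbabilityMeasure P]
    (X : ℕ → Ω → ℝ) (hmeas : ∀ i, Measurable (X i))
    (hindep : ProbabilityTheory.iIndepFun X P)
    (hident : ∀ i, ProbabilityTheory.IdentDistrib (X i) (X 0) P P)
    (ν : Measure ℝ) (hν : ν = Measure.map (X 0) P)
    (hmean : ∫ x, x ∂ν = 0)
    (σ2 : ℝ) (hσ2 : σ2 = ∫ x, x ^ 2 ∂ν) (hσ2pos : 0 < σ2)
    (hvarint : Integrable (fun x => x ^ 2) ν)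
    (ψ : ℝ → ℝ) (hψmeas : Measurable ψ)
    (hψsq : Integrable (fun x => ψ x ^ 2) ν)
    (hψXint : Integrable (fun x => ψ x * x) ν) :
    TendstoInMeasure P
      (fun (n : ℕ) (ω : Ω) =>
        Real.sqrt n *
          ((n : ℝ)⁻¹ * ∑ i ∈ range n,
              (1 - X i ω * ((n : ℝ)⁻¹ * ∑ j ∈ range n, X j ω)
                  / ((n : ℝ)⁻¹ * ∑ j ∈ range n, X j ω ^ 2)) * ψ (X i ω)
            - ∫ x, ψ x ∂ν
            - (n : ℝ)⁻¹ * ∑ i ∈ range n,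
                (ψ (X i ω) - ∫ x, ψ x ∂ν
                  - ((∫ x, ψ x * x ∂ν) / σ2) * X i ω)))
      atTop (fun _ => 0) := by
  have hψXmeas : ∀ i, Measurable (fun ω => ψ (X i ω) * X i ω) :=
    fun i => (hψmeas.comp (hmeas i)).mul (hmeas i)
  have hmap : ∀ i, Measure.map (X i) P = ν := fun i => by rw [hν, (hident i).map_eq]
  have hEX : ∀ i, ∫ ω, X i ω ∂P = 0 := fun i => by
    rw [← hmean, ← hmap i]
    exact (integral_map (hmeas i).aemeasurable measurable_id.aestronglyMeasurable).symm
  have hEX2 : ∀ i, ∫ ω, X i ω ^ 2 ∂P = σ2 := fun i => by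
    rw [hσ2, ← hmap i]
    exact (integral_map (hmeas i).aemeasurable
      (measurable_id.pow_const 2).aestronglyMeasurable).symm
  have hEψX : ∀ i, ∫ ω, ψ (X i ω) * X i ω ∂P = ∫ x, ψ x * x ∂ν := fun i => by
    rw [← hmap i]
    exact (integral_map (hmeas i).aemeasurable
      (hψmeas.mul measurable_id).aestronglyMeasurable).symm
  have hIntX2 : ∀ i, Integrable (fun ω => X i ω ^ 2) P := fun i => by
    have h := hvarint; rw [← hmap i] at h
    exact (integrable_map_measure (measurable_id.pow_const 2).aestronglyMeasurable
      (hmeas i).aemeasurable).mp h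
  have hIntψX : ∀ i, Integrable (fun ω => ψ (X i ω) * X i ω) P := fun i => by
    have h := hψXint; rw [← hmap i] at h
    exact (integrable_map_measure (hψmeas.mul measurable_id).aestronglyMeasurable
      (hmeas i).aemeasurable).mp h
  have hMemL2 : ∀ i, MemLp (X i) 2 P := fun i =>
    (memLp_two_iff_integrable_sq (hmeas i).aestronglyMeasurable).mpr (hIntX2 i)
  have hVar : ∀ i, ProbabilityTheory.variance (X i) P = σ2 := fun i => by
    rw [ProbabilityTheory.variance_eq_sub (hMemL2 i), hEX i]
    simp only [Pi.pow_apply]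
    rw [hEX2 i]; ring
  -- Chebyshev bound for `√n * X̄ₙ`
  have hcheb : ∀ (n : ℕ) (M : ℝ), 0 < M →
      P {ω | M ≤ |Real.sqrt n * ((n : ℝ)⁻¹ * ∑ i ∈ range n, X i ω)|} ≤
        ENNReal.ofReal (σ2 / M ^ 2) := by
    intro n M hM
    rcases Nat.eq_zero_or_pos n with rfl | hn
    · have : {ω : Ω | M ≤ |Real.sqrt (0:ℕ) * (((0:ℕ) : ℝ)⁻¹ * ∑ i ∈ range 0, X i ω)|} = ∅ := by
        ext ω; simp [hM.not_ge]
      rw [this]; simp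
    · have hn0 : ((n : ℝ)) ≠ 0 := Nat.cast_ne_zero.mpr hn.ne'
      set cte : ℝ := Real.sqrt n * (n : ℝ)⁻¹ with hcte
      have hfun : ∀ ω, Real.sqrt n * ((n : ℝ)⁻¹ * ∑ i ∈ range n, X i ω) =
          cte * ∑ i ∈ range n, X i ω := fun ω => by rw [hcte]; ring
      have heqf : (fun ω => ∑ i ∈ range n, X i ω) = ∑ i ∈ range n, X i := by
        funext ω; simp
      have hL2sum : MemLp (fun ω => ∑ i ∈ range n, X i ω) 2 P := by
        rw [heqf]
        exact memLp_finset_sum' (range n) (fun i (_ : i ∈ range n) => hMemL2 i)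
      have hL : MemLp (fun ω => cte * ∑ i ∈ range n, X i ω) 2 P := hL2sum.const_mul cte
      have hE0 : ∫ ω, cte * ∑ i ∈ range n, X i ω ∂P = 0 := by
        rw [integral_const_mul, integral_finset_sum _
          (fun i _ => (hMemL2 i).integrable one_le_two)]
        simp [hEX]
      have hVsum : ProbabilityTheory.variance (fun ω => ∑ i ∈ range n, X i ω) P
          = (n : ℝ) * σ2 := by
        have hpair : Set.Pairwise ↑(range n)
            (fun i j => ProbabilityTheory.IndepFun (X i) (X j) P) :=
          fun i _ j _ hij => hindep.indepFun hij
        have h := ProbabilityTheory.IndepFun.variance_sum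
          (fun i (_ : i ∈ range n) => hMemL2 i) hpair
        have heq : (fun ω => ∑ i ∈ range n, X i ω) = ∑ i ∈ range n, X i := by
          funext ω; simp
        rw [heq, h]
        simp [hVar, mul_comm]
      have hVc : ProbabilityTheory.variance (fun ω => cte * ∑ i ∈ range n, X i ω) P = σ2 := by
        rw [ProbabilityTheory.variance_const_mul, hVsum, hcte]
        rw [mul_pow, Real.sq_sqrt (Nat.cast_nonneg n)]
        field_simp
      have hbnd := ProbabilityTheory.meas_ge_le_variance_div_sq hL hM
      rw [hVc] at hbnd
      simp only [hE0, sub_zero] at hbnd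
      calc P {ω | M ≤ |Real.sqrt n * ((n : ℝ)⁻¹ * ∑ i ∈ range n, X i ω)|}
          = P {ω | M ≤ |cte * ∑ i ∈ range n, X i ω|} := by
            congr 1; ext ω; simp only [Set.mem_setOf_eq, hfun ω]
        _ ≤ ENNReal.ofReal (σ2 / M ^ 2) := hbnd
  -- SLLN for the two empirical averages
  have hpairg : ∀ g : ℝ → ℝ, Measurable g →
      Pairwise (Function.onFun (ProbabilityTheory.IndepFun · · P) fun i ω => g (X i ω)) :=
    fun g hg i j hij => (hindep.comp (fun _ => g) (fun _ => hg)).indepFun hij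
  have hsl1 := ProbabilityTheory.strong_law_ae_real (fun i ω => ψ (X i ω) * X i ω)
    (hIntψX 0) (hpairg (fun x => ψ x * x) (hψmeas.mul measurable_id))
    (fun i => (hident i).comp (hψmeas.mul measurable_id))
  have hsl2 := ProbabilityTheory.strong_law_ae_real (fun i ω => X i ω ^ 2)
    (hIntX2 0) (hpairg (fun x => x ^ 2) (measurable_id.pow_const 2))
    (fun i => (hident i).comp (measurable_id.pow_const 2))
  rw [hEψX 0] at hsl1
  rw [hEX2 0] at hsl2
  set c : ℝ := (∫ x, ψ x * x ∂ν) / σ2 with hc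
  set Z : ℕ → Ω → ℝ := fun n ω =>
    c - ((n : ℝ)⁻¹ * ∑ i ∈ range n, ψ (X i ω) * X i ω)
        / ((n : ℝ)⁻¹ * ∑ i ∈ range n, X i ω ^ 2) with hZ
  have hZmeas : ∀ n, AEStronglyMeasurable (Z n) P := fun n => by
    refine (Measurable.aestronglyMeasurable ?_)
    exact measurable_const.sub
      ((measurable_const.mul (Finset.measurable_sum _ fun i _ => hψXmeas i)).div
        (measurable_const.mul (Finset.measurable_sum _ fun i _ => (hmeas i).pow_const 2)))
  have hZae : ∀ᵐ ω ∂P, Tendsto (fun n => Z n ω) atTop (𝓝 (0 : ℝ)) := by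
    filter_upwards [hsl1, hsl2] with ω h1 h2
    have h1' : Tendsto (fun n : ℕ => (n : ℝ)⁻¹ * ∑ i ∈ range n, ψ (X i ω) * X i ω)
        atTop (𝓝 (∫ x, ψ x * x ∂ν)) := by
      simpa [div_eq_inv_mul] using h1
    have h2' : Tendsto (fun n : ℕ => (n : ℝ)⁻¹ * ∑ i ∈ range n, X i ω ^ 2)
        atTop (𝓝 σ2) := by
      simpa [div_eq_inv_mul] using h2
    have hq : Tendsto (fun n : ℕ => ((n : ℝ)⁻¹ * ∑ i ∈ range n, ψ (X i ω) * X i ω)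
        / ((n : ℝ)⁻¹ * ∑ i ∈ range n, X i ω ^ 2)) atTop (𝓝 c) := by
      rw [hc]; exact h1'.div h2' hσ2pos.ne'
    have hfin : Tendsto (fun n => Z n ω) atTop (𝓝 (c - c)) :=
      tendsto_const_nhds.sub hq
    simpa using hfin
  have hmain := tight_mul hcheb hZmeas hZae
  have heq : (fun (n : ℕ) (ω : Ω) =>
        Real.sqrt n *
          ((n : ℝ)⁻¹ * ∑ i ∈ range n,
              (1 - X i ω * ((n : ℝ)⁻¹ * ∑ j ∈ range n, X j ω)
                  / ((n : ℝ)⁻¹ * ∑ j ∈ range n, X j ω ^ 2)) * ψ (X i ω)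
            - ∫ x, ψ x ∂ν
            - (n : ℝ)⁻¹ * ∑ i ∈ range n,
                (ψ (X i ω) - ∫ x, ψ x ∂ν
                  - ((∫ x, ψ x * x ∂ν) / σ2) * X i ω))) =
      fun (n : ℕ) (ω : Ω) => Real.sqrt n * ((n : ℝ)⁻¹ * ∑ i ∈ range n, X i ω) * Z n ω := by
    funext n ω
    rcases Nat.eq_zero_or_pos n with rfl | hn
    · simp
    · have hn0 : ((n : ℝ)) ≠ 0 := Nat.cast_ne_zero.mpr hn.ne'
      have e1 : ∑ i ∈ range n,
          (1 - X i ω * ((n : ℝ)⁻¹ * ∑ j ∈ range n, X j ω)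
              / ((n : ℝ)⁻¹ * ∑ j ∈ range n, X j ω ^ 2)) * ψ (X i ω)
          = (∑ i ∈ range n, ψ (X i ω)) -
            (n : ℝ)⁻¹ * (∑ j ∈ range n, X j ω) *
              ((n : ℝ)⁻¹ * ∑ j ∈ range n, X j ω ^ 2)⁻¹ *
              ∑ i ∈ range n, ψ (X i ω) * X i ω := by
        rw [Finset.sum_congr rfl (fun i _ => show _ = ψ (X i ω) -
            ((n : ℝ)⁻¹ * (∑ j ∈ range n, X j ω) *
              ((n : ℝ)⁻¹ * ∑ j ∈ range n, X j ω ^ 2)⁻¹) * (ψ (X i ω) * X i ω) by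
          rw [div_eq_mul_inv]; ring)]
        rw [Finset.sum_sub_distrib, ← Finset.mul_sum]
      have e2 : ∑ i ∈ range n,
          (ψ (X i ω) - ∫ x, ψ x ∂ν - ((∫ x, ψ x * x ∂ν) / σ2) * X i ω)
          = (∑ i ∈ range n, ψ (X i ω)) - (n : ℝ) * ∫ x, ψ x ∂ν -
            ((∫ x, ψ x * x ∂ν) / σ2) * ∑ i ∈ range n, X i ω := by
        rw [Finset.sum_sub_distrib, Finset.sum_sub_distrib, ← Finset.mul_sum,
          Finset.sum_const, Finset.card_range, nsmul_eq_mul]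
      rw [e1, e2, hZ]
      simp only [hc, div_eq_mul_inv]
      exact key_alg (∑ i ∈ range n, ψ (X i ω)) (∑ j ∈ range n, X j ω)
        (∑ j ∈ range n, X j ω ^ 2) (∑ i ∈ range n, ψ (X i ω) * X i ω)
        (∫ x, ψ x ∂ν) ((∫ x, ψ x * x ∂ν) * σ2⁻¹) (Real.sqrt n) (n : ℝ)
        (inv_mul_cancel₀ hn0)
  rw [heq]
  exact hmain
end
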